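/- arXiv:1508.06715 — 2 statements merged into one kernel-verified Lean document; each statement's English description precedes it below -/
import Mathlib

section
/- Let P be a probability measure on a measurable space Ω, and let A, B, H be measurable sets with P(H ∩ B) > 0 and P(Hᶜ ∩ B) > 0. Then P(A | B) ≤ 1 − P(H | B) · (1 − P(A | H ∩ B)). (This is the paper's upper bound RR ≤ 1 − fdr⁽¹⁾·(1 − α₂), showing that when fdr⁽¹⁾ > 0 the reproducibility rate is bounded away from 1 no matter how large the replication sample is.) -/
open MeasureTheory ProbabilityTheory

/-- Upper bound on the reproducibility rate: `RR ≤ 1 − fdr⁽¹⁾ · (1 − α₂)`. -/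
theorem rr_upper_bound {Ω : Type*} [MeasurableSpace Ω] (P : Measure Ω)
    [IsProbabilityMeasure P] {A B H : Set Ω}
    (hA : MeasurableSet A) (hB : MeasurableSet B) (hH : MeasurableSet H)
    (hHB : 0 < P (H ∩ B)) (hHcB : 0 < P (Hᶜ ∩ B)) :
    P[A | B] ≤ 1 - P[H | B] * (1 - P[A | H ∩ B]) := by
  have hPHB : P (H ∩ B) ≠ 0 := hHB.ne'
  have hPB : P B ≠ 0 := fun h =>
    hPHB (measure_mono_null Set.inter_subset_right h)
  have hμ : IsProbabilityMeasure (P[|B]) := cond_isProbabilityMeasure hPB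
  have hfin : ∀ s : Set Ω, P[s|B] ≠ ⊤ := fun s => measure_ne_top _ s
  have hle1 : ∀ s : Set Ω, P[s|B] ≤ 1 := fun s => prob_le_one
  have hα1 : P[A | H ∩ B] ≤ 1 := by
    have : IsProbabilityMeasure (P[|H ∩ B]) := cond_isProbabilityMeasure hPHB
    exact prob_le_one
  -- key multiplicative identity
  have key : P[H|B] * P[A | H ∩ B] = P[A ∩ H | B] := by
    rw [cond_apply hB, cond_apply (hH.inter hB), cond_apply hB, Set.inter_comm B H]
    have hne : P (H ∩ B) ≠ ⊤ := measure_ne_top _ _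
    calc (P B)⁻¹ * P (H ∩ B) * ((P (H ∩ B))⁻¹ * P (H ∩ B ∩ A))
        = (P B)⁻¹ * ((P (H ∩ B) * (P (H ∩ B))⁻¹) * P (H ∩ B ∩ A)) := by ring
      _ = (P B)⁻¹ * P (H ∩ B ∩ A) := by rw [ENNReal.mul_inv_cancel hPHB hne, one_mul]
      _ = (P B)⁻¹ * P (B ∩ (A ∩ H)) := by
          rw [show H ∩ B ∩ A = B ∩ (A ∩ H) by ac_rfl]
  -- split
  have hsplit : P[A|B] ≤ P[A ∩ H|B] + P[Hᶜ|B] := by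
    calc P[A|B] ≤ P[(A ∩ H) ∪ Hᶜ|B] := by
          apply measure_mono
          intro x hx
          by_cases hxH : x ∈ H
          · exact Or.inl ⟨hx, hxH⟩
          · exact Or.inr hxH
      _ ≤ P[A ∩ H|B] + P[Hᶜ|B] := measure_union_le _ _
  have hcompl : P[H|B] + P[Hᶜ|B] = 1 := by
    rw [← measure_univ (μ := P[|B])]; exact measure_add_measure_compl hH
  have ht1 : P[H|B] * (1 - P[A | H ∩ B]) ≤ 1 := by
    calc P[H|B] * (1 - P[A | H ∩ B]) ≤ 1 * 1 :=
          mul_le_mul' (hle1 H) tsub_le_self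
      _ = 1 := one_mul 1
  apply ENNReal.le_sub_of_add_le_right (by finiteness)
  have expand : P[H|B] * (1 - P[A | H ∩ B]) = P[H|B] - P[A ∩ H|B] := by
    rw [ENNReal.mul_sub (fun _ _ => hfin H), mul_one, key]
  rw [expand]
  have hAHle : P[A ∩ H|B] ≤ P[H|B] := measure_mono Set.inter_subset_right
  calc P[A|B] + (P[H|B] - P[A ∩ H|B])
      ≤ (P[A ∩ H|B] + P[Hᶜ|B]) + (P[H|B] - P[A ∩ H|B]) := add_le_add_left hsplit _
    _ = (P[A ∩ H|B] + (P[H|B] - P[A ∩ H|B])) + P[Hᶜ|B] := by ring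
    _ = P[H|B] + P[Hᶜ|B] := by rw [add_tsub_cancel_of_le hAHle]
    _ = 1 := hcompl
end

section
/- Let σ₀, σ⁽¹⁾, σ⁽²⁾ > 0, let μ̂⁽¹⁾, q ∈ ℝ, let s ∈ {−1, 1}, and set λ = 1/(1 + (σ⁽¹⁾/σ₀)²), z* = λ·μ̂⁽¹⁾/σ⁽²⁾, and σ* = √(1 + λ·(σ⁽¹⁾/σ⁽²⁾)²). Then the measure (gaussianReal (λ·μ̂⁽¹⁾) (λ·(σ⁽¹⁾)²)).bind (fun m => gaussianReal (m/σ⁽²⁾) 1) assigns to the set {x ∈ ℝ : s·x > q} the probability Φ((s·z* − q)/σ*). (This is the paper's closed-form expression for the Bayesian predictive power η⁽²⁾ = Φ((sgn(z⁽¹⁾)·z* − z_{α₂})/σ*) of the replication study, with s = sgn(z⁽¹⁾) and q = z_{α₂} the upper-α₂ quantile.) -/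
open MeasureTheory ProbabilityTheory Real Set
open scoped NNReal ENNReal

lemma measurable_gaussPDF_prod (w : ℝ≥0) :
    Measurable (fun p : ℝ × ℝ => gaussianPDF p.1 w p.2) := by
  apply Measurable.ennreal_ofReal
  have : Continuous (fun p : ℝ × ℝ => gaussianPDFReal p.1 w p.2) := by
    simp only [gaussianPDFReal]
    fun_prop
  exact this.measurable

lemma measurable_gaussianReal_kernel {w : ℝ≥0} (hw : w ≠ 0) :
    Measurable (fun m : ℝ => gaussianReal m w) := by
  refine Measure.measurable_of_measurable_coe _ fun s hs => ?_
  simp_rw [gaussianReal_apply _ hw s]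
  exact (measurable_gaussPDF_prod w).lintegral_prod_right'

lemma pdf_mul (a x : ℝ) {v w : ℝ≥0} (hv : v ≠ 0) (hw : w ≠ 0) (m : ℝ) :
    gaussianPDFReal a v m * gaussianPDFReal m w x
      = gaussianPDFReal a (v + w) x
        * gaussianPDFReal (((w : ℝ) * a + (v : ℝ) * x) / ((v : ℝ) + (w : ℝ)))
            (v * w / (v + w)) m := by
  have hv' : (0:ℝ) < v := lt_of_le_of_ne (v.coe_nonneg) (by exact_mod_cast (Ne.symm hv))
  have hw' : (0:ℝ) < w := lt_of_le_of_ne (w.coe_nonneg) (by exact_mod_cast (Ne.symm hw))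
  have hvw : (0:ℝ) < (v:ℝ) + (w:ℝ) := by linarith
  have hu : ((v * w / (v + w) : ℝ≥0) : ℝ) = (v:ℝ) * (w:ℝ) / ((v:ℝ) + (w:ℝ)) := by push_cast; ring
  simp only [gaussianPDFReal, NNReal.coe_add, hu]
  rw [mul_mul_mul_comm, mul_mul_mul_comm ((Real.sqrt (2 * π * ((v:ℝ)+(w:ℝ))))⁻¹),
    ← Real.exp_add, ← Real.exp_add]
  have hπ : (0:ℝ) < π := Real.pi_pos
  congr 1
  · rw [← mul_inv, ← mul_inv, ← Real.sqrt_mul (by positivity), ← Real.sqrt_mul (by positivity)]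
    congr 2
    field_simp
  · congr 1
    field_simp
    ring

lemma gauss_conv (a : ℝ) (v w : ℝ≥0) (hv : v ≠ 0) (hw : w ≠ 0) :
    (gaussianReal a v).bind (fun m => gaussianReal m w) = gaussianReal a (v + w) := by
  have hvw : v + w ≠ 0 := by simp [hv, hw]
  ext s hs
  rw [Measure.bind_apply hs (measurable_gaussianReal_kernel hw).aemeasurable,
    gaussianReal_apply a hvw s]
  simp_rw [gaussianReal_apply _ hw s]
  have hmeasInner : Measurable (fun m : ℝ => ∫⁻ x in s, gaussianPDF m w x) :=
    (measurable_gaussPDF_prod w).lintegral_prod_right'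
  rw [gaussianReal_of_var_ne_zero a hv,
    lintegral_withDensity_eq_lintegral_mul _ (measurable_gaussianPDF a v) hmeasInner]
  have step1 : ∀ m : ℝ, gaussianPDF a v m * ∫⁻ x in s, gaussianPDF m w x
      = ∫⁻ x in s, gaussianPDF a v m * gaussianPDF m w x := fun m =>
    (lintegral_const_mul _ (measurable_gaussianPDF m w)).symm
  have hswap :
      ∫⁻ m, gaussianPDF a v m * ∫⁻ x in s, gaussianPDF m w x
        = ∫⁻ x in s, ∫⁻ m, gaussianPDF a v m * gaussianPDF m w x := by
    rw [lintegral_congr step1]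
    exact lintegral_lintegral_swap (((measurable_gaussianPDF a v).comp measurable_fst).mul
      (measurable_gaussPDF_prod w)).aemeasurable
  rw [show (gaussianPDF a v * fun m => ∫⁻ x in s, gaussianPDF m w x)
      = fun m => gaussianPDF a v m * ∫⁻ x in s, gaussianPDF m w x from rfl, hswap]
  refine setLIntegral_congr_fun hs (fun x _ => ?_)
  have hu : (v * w / (v + w) : ℝ≥0) ≠ 0 := by
    refine div_ne_zero (mul_ne_zero hv hw) hvw
  calc ∫⁻ m, gaussianPDF a v m * gaussianPDF m w x
      = ∫⁻ m, gaussianPDF a (v+w) x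
          * gaussianPDF (((w : ℝ) * a + (v : ℝ) * x) / ((v : ℝ) + (w : ℝ))) (v * w / (v + w)) m := by
        congr 1; ext m
        simp only [gaussianPDF]
        rw [← ENNReal.ofReal_mul (gaussianPDFReal_nonneg _ _ _),
          ← ENNReal.ofReal_mul (gaussianPDFReal_nonneg _ _ _), pdf_mul a x hv hw m]
    _ = gaussianPDF a (v+w) x := by
        rw [lintegral_const_mul _ (measurable_gaussianPDF _ _),
          lintegral_gaussianPDF_eq_one _ hu, mul_one]

lemma gauss_singleton (M : ℝ) {V : ℝ≥0} (hV : V ≠ 0) (t : ℝ) :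
    gaussianReal M V {t} = 0 :=
  gaussianReal_absolutelyContinuous M hV (measure_singleton t)

lemma gauss_as_map (M : ℝ) (V : ℝ≥0) :
    gaussianReal M V = (gaussianReal 0 1).map (fun x => x * Real.sqrt V + M) := by
  have h1 : (fun x : ℝ => x * Real.sqrt V + M) = (· + M) ∘ (· * Real.sqrt V) := rfl
  rw [h1, ← Measure.map_map (measurable_add_const M) (measurable_mul_const _),
    gaussianReal_map_mul_const, gaussianReal_map_add_const]
  congr 1
  · ring
  · ext
    simp [Real.sq_sqrt V.coe_nonneg]

lemma gauss_Iic (M : ℝ) {V : ℝ≥0} (hV : V ≠ 0) (t : ℝ) :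
    gaussianReal M V (Iic t)
      = ENNReal.ofReal (cdf (gaussianReal 0 1) ((t - M) / Real.sqrt V)) := by
  have hV' : (0:ℝ) < Real.sqrt V := Real.sqrt_pos.mpr
    (lt_of_le_of_ne V.coe_nonneg (by exact_mod_cast (Ne.symm hV)))
  rw [gauss_as_map M V, Measure.map_apply (by fun_prop) measurableSet_Iic]
  have : (fun x : ℝ => x * Real.sqrt V + M) ⁻¹' (Iic t) = Iic ((t - M) / Real.sqrt V) := by
    ext x
    simp only [mem_preimage, mem_Iic]
    rw [le_div_iff₀ hV']
    constructor <;> intro h <;> linarith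
  rw [this, ofReal_cdf]

lemma std_symm (t : ℝ) :
    gaussianReal 0 1 (Ici t) = gaussianReal 0 1 (Iic (-t)) := by
  have hmap : (gaussianReal 0 1).map (fun x : ℝ => -1 * x) = gaussianReal 0 1 := by
    rw [gaussianReal_map_const_mul]
    norm_num
  conv_lhs => rw [← hmap]
  rw [Measure.map_apply (by fun_prop) measurableSet_Ici]
  congr 1
  ext x
  simp only [mem_preimage, mem_Ici, mem_Iic]
  constructor <;> intro h <;> linarith

lemma gauss_Ioi (M : ℝ) {V : ℝ≥0} (hV : V ≠ 0) (t : ℝ) :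
    gaussianReal M V (Ioi t)
      = ENNReal.ofReal (cdf (gaussianReal 0 1) ((M - t) / Real.sqrt V)) := by
  have hV' : (0:ℝ) < Real.sqrt V := Real.sqrt_pos.mpr
    (lt_of_le_of_ne V.coe_nonneg (by exact_mod_cast (Ne.symm hV)))
  have hIci : gaussianReal M V (Ioi t) = gaussianReal M V (Ici t) := by
    rw [← Set.Ici_sdiff_left, measure_diff_null (gauss_singleton M hV t)]
  rw [hIci, gauss_as_map M V, Measure.map_apply (by fun_prop) measurableSet_Ici]
  have : (fun x : ℝ => x * Real.sqrt V + M) ⁻¹' (Ici t) = Ici ((t - M) / Real.sqrt V) := by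
    ext x
    simp only [mem_preimage, mem_Ici]
    rw [div_le_iff₀ hV']
    constructor <;> intro h <;> linarith
  rw [this, std_symm, ofReal_cdf]
  congr 2
  rw [← neg_div, neg_sub]

lemma gauss_Iio (M : ℝ) {V : ℝ≥0} (hV : V ≠ 0) (t : ℝ) :
    gaussianReal M V (Iio t)
      = ENNReal.ofReal (cdf (gaussianReal 0 1) ((t - M) / Real.sqrt V)) := by
  rw [← gauss_Iic M hV t, ← Set.Iic_diff_right, measure_diff_null (gauss_singleton M hV t)]

lemma bind_comp_meas {μ : Measure ℝ} {f : ℝ → ℝ} (hf : Measurable f) {κ : ℝ → Measure ℝ}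
    (hκ : Measurable κ) : μ.bind (κ ∘ f) = (μ.map f).bind κ := by
  ext s hs
  rw [Measure.bind_apply hs hκ.aemeasurable, Measure.bind_apply hs (hκ.comp hf).aemeasurable]
  exact (lintegral_map ((Measure.measurable_coe hs).comp hκ) hf).symm

/-- Closed-form Bayesian predictive power of the replication study:
`η⁽²⁾ = Φ((sgn(z⁽¹⁾)·z* − z_{α₂})/σ*)`. -/
theorem bayesian_predictive_power (σ₀ σ₁ σ₂ : ℝ≥0)
    (hσ₀ : 0 < σ₀) (hσ₁ : 0 < σ₁) (hσ₂ : 0 < σ₂) (muHat q : ℝ)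
    (s : ℝ) (hs : s = -1 ∨ s = 1)
    (lam : ℝ≥0) (hlam : lam = 1 / (1 + (σ₁ / σ₀) ^ 2))
    (zstar : ℝ) (hzstar : zstar = (lam : ℝ) * muHat / σ₂)
    (σstar : ℝ) (hσstar : σstar = Real.sqrt (1 + (lam : ℝ) * ((σ₁ : ℝ) / σ₂) ^ 2)) :
    ((gaussianReal ((lam : ℝ) * muHat) (lam * σ₁ ^ 2)).bind
        (fun m => gaussianReal (m / σ₂) 1)) {x : ℝ | q < s * x}
      = ENNReal.ofReal (cdf (gaussianReal 0 1) ((s * zstar - q) / σstar)) := by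
  have hσ₂' : ((σ₂ : ℝ)) ≠ 0 := ne_of_gt (by exact_mod_cast hσ₂)
  have hlam0 : lam ≠ 0 := by
    rw [hlam]
    exact one_div_ne_zero (by positivity)
  have hV₀ : lam * σ₁ ^ 2 ≠ 0 := mul_ne_zero hlam0 (pow_ne_zero 2 hσ₁.ne')
  set c : ℝ := (σ₂ : ℝ)⁻¹ with hc
  have hc0 : c ≠ 0 := inv_ne_zero hσ₂'
  have hker : (fun m : ℝ => gaussianReal (m / σ₂) 1)
      = (fun m' => gaussianReal m' 1) ∘ (· * c) := by
    funext m
    simp only [Function.comp_apply]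
    rw [div_eq_mul_inv]
  set V : ℝ≥0 := ⟨c ^ 2, sq_nonneg _⟩ * (lam * σ₁ ^ 2) + 1 with hVdef
  have hV : V ≠ 0 := by simp [hVdef]
  have hbind : ((gaussianReal ((lam : ℝ) * muHat) (lam * σ₁ ^ 2)).bind
      (fun m => gaussianReal (m / σ₂) 1))
      = gaussianReal (c * ((lam : ℝ) * muHat)) V := by
    rw [hker, bind_comp_meas (measurable_mul_const c) (measurable_gaussianReal_kernel one_ne_zero),
      gaussianReal_map_mul_const, gauss_conv _ _ _ ?_ one_ne_zero]
    · exact congrArg _ hVdef.symm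
    have hcsq : (⟨c ^ 2, sq_nonneg _⟩ : ℝ≥0) ≠ 0 := by
      intro h
      exact hc0 ((pow_eq_zero_iff two_ne_zero).mp (congrArg Subtype.val h))
    exact mul_ne_zero hcsq hV₀
  have hz : zstar = c * ((lam : ℝ) * muHat) := by rw [hzstar, div_eq_mul_inv, mul_comm]
  have hσs : σstar = Real.sqrt V := by
    rw [hσstar]
    congr 1
    push_cast [hVdef]
    field_simp [hc, hσ₂']
    show (σ₂:ℝ)^2 + (lam:ℝ) * (σ₁:ℝ)^2
      = (σ₂:ℝ)^2 * (c ^ 2 * (((lam * σ₁ ^ 2 : ℝ≥0)) : ℝ) + 1)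
    push_cast
    rw [hc, mul_add, ← mul_assoc, inv_pow, mul_inv_cancel₀ (pow_ne_zero 2 hσ₂')]
    ring
  rcases hs with h | h <;> subst h
  · -- s = -1
    have hset : {x : ℝ | q < -1 * x} = Iio (-q) := by
      ext x
      simp only [mem_setOf_eq, mem_Iio, neg_one_mul]
      constructor <;> intro h <;> linarith
    rw [hbind, hset, gauss_Iio _ hV, hσs, hz]
    congr 2
    ring
  · -- s = 1
    have hset : {x : ℝ | q < 1 * x} = Ioi q := by
      ext x
      simp [mem_setOf_eq, mem_Ioi]
    rw [hbind, hset, gauss_Ioi _ hV, hσs, hz]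
    congr 2
    ring
end
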